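/- arXiv:1802.09954 — 5 statements merged into one kernel-verified Lean document; each statement's English description precedes it below -/
import Mathlib

section
/- If for every index k in K there exist at least two distinct indices i in I with k in K_i, and D_i are symmetric positive semidefinite K×K matrices each strictly positive definite on the coordinate subspace H_i = {x : x_j = 0 for j ∉ K_i} and vanishing on its orthogonal complement, then for any fixed j in I, the sum D_{-j} = Σ_{i ≠ j} D_i is (strictly) positive definite on all of ℝ^K. -/
open Matrix BigOperators Filter Topology

/-- Orthogonal projection onto the coordinate subspace determined by `S`. -/
noncomputable def proj (K : Type*) [Fintype K] [DecidableEq K] (S : Finset K) :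
    Matrix K K ℝ :=
  Matrix.diagonal (fun k => if k ∈ S then (1 : ℝ) else 0)

/-- `B ∈ S_≻^{H}` : symmetric nonnegative definite, vanishing on vectors orthogonal
to the coordinate subspace `H` given by `S`, and strictly positive definite on `H`. -/
def SPDOn {K : Type*} [Fintype K] [DecidableEq K] (S : Finset K) (B : Matrix K K ℝ) : Prop :=
  B.PosSemidef ∧
  (∀ x : K → ℝ, (∀ j, j ∉ S → x j = 0) → x ≠ 0 → 0 < x ⬝ᵥ (B *ᵥ x)) ∧
  (∀ x : K → ℝ, (∀ j, j ∈ S → x j = 0) → B *ᵥ x = 0)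

/-- The inverse of `B` computed on the coordinate subspace given by `S`, extended by zero
(`B^{-H}` in the paper). -/
noncomputable def invOn {K : Type*} [Fintype K] [DecidableEq K] (S : Finset K)
    (B : Matrix K K ℝ) : Matrix K K ℝ :=
  proj K S * (B + proj K Sᶜ)⁻¹ * proj K S

/-- `A ≺_{H} B` : the difference `B - A` belongs to `S_≻^{H}`. -/
def ltOn {K : Type*} [Fintype K] [DecidableEq K] (S : Finset K) (A B : Matrix K K ℝ) : Prop :=
  SPDOn S (B - A)

/-- The best-response map `F_i(X) = (B_i^{-H_i} + π_i (X_{-i})⁻¹ π_i)^{-H_i}`. -/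
noncomputable def Fmap {I K : Type*} [Fintype I] [DecidableEq I] [Fintype K] [DecidableEq K]
    (Ki : I → Finset K) (B : I → Matrix K K ℝ) (X : I → Matrix K K ℝ) (i : I) :
    Matrix K K ℝ :=
  invOn (Ki i) (invOn (Ki i) (B i) +
    proj K (Ki i) * (∑ j ∈ Finset.univ.erase i, X j)⁻¹ * proj K (Ki i))

lemma key {K : Type*} [Fintype K] [DecidableEq K] (S : Finset K) (B : Matrix K K ℝ)
    (hB : SPDOn S B) (x : K → ℝ) (k : K) (hk : k ∈ S) (hxk : x k ≠ 0) :
    0 < x ⬝ᵥ (B *ᵥ x) := by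
  obtain ⟨hps, hpos, hker⟩ := hB
  set y : K → ℝ := fun m => if m ∈ S then x m else 0 with hy
  set z : K → ℝ := fun m => if m ∈ S then 0 else x m with hz
  have hxyz : x = y + z := by
    funext m; simp [hy, hz]; by_cases h : m ∈ S <;> simp [h]
  have hBz : B *ᵥ z = 0 := hker z (by intro m hm; simp [hz, hm])
  have hzB : z ⬝ᵥ (B *ᵥ y) = 0 := by
    have hsym : Bᵀ = B := hps.1
    have : z ᵥ* B = 0 := by
      calc z ᵥ* B = z ᵥ* Bᵀᵀ := by rw [transpose_transpose]
      _ = Bᵀ *ᵥ z := vecMul_transpose _ _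
      _ = 0 := by rw [hsym, hBz]
    rw [dotProduct_mulVec, this, zero_dotProduct]
  have hx : x ⬝ᵥ (B *ᵥ x) = y ⬝ᵥ (B *ᵥ y) := by
    rw [hxyz]
    simp [mulVec_add, hBz, dotProduct_add, add_dotProduct, hzB]
  rw [hx]
  refine hpos y (fun m hm => by simp [hy, hm]) ?_
  intro h0
  have : y k = 0 := congrFun h0 k
  simp [hy, hk] at this
  exact hxk this

/-- If every security is accessible to at least two distinct traders and each `D i` is
strictly positive definite on `H_i` (zero off it), then for any fixed `j`,
`∑_{i ≠ j} D i` is positive definite on all of `ℝ^K`. -/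
theorem stmt_0 {I K : Type*} [Fintype I] [DecidableEq I] [Fintype K] [DecidableEq K]
    (Ki : I → Finset K)
    (hacc : ∀ k : K, ∃ i j : I, i ≠ j ∧ k ∈ Ki i ∧ k ∈ Ki j)
    (D : I → Matrix K K ℝ) (hD : ∀ i, SPDOn (Ki i) (D i)) (j : I) :
    (∑ i ∈ Finset.univ.erase j, D i).PosDef := by
  rw [Matrix.posDef_iff_dotProduct_mulVec]
  constructor
  · simp only [Matrix.IsHermitian, Matrix.conjTranspose_sum]
    exact Finset.sum_congr rfl fun i _ => (hD i).1.1
  · intro x hx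
    have hstar : star x = x := by simp
    rw [hstar]
    obtain ⟨k, hk⟩ : ∃ k, x k ≠ 0 := Function.ne_iff.mp hx
    obtain ⟨a, b, hab, ha, hb⟩ := hacc k
    obtain ⟨i0, hi0j, hi0k⟩ : ∃ i0, i0 ≠ j ∧ k ∈ Ki i0 := by
      by_cases h : a = j
      · exact ⟨b, by rw [← h]; exact hab.symm, hb⟩
      · exact ⟨a, h, ha⟩
    have hsum : x ⬝ᵥ (∑ i ∈ Finset.univ.erase j, D i) *ᵥ x
        = ∑ i ∈ Finset.univ.erase j, x ⬝ᵥ (D i *ᵥ x) := by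
      have h := map_sum (Matrix.mulVec.addMonoidHomLeft (α := ℝ) x) D (Finset.univ.erase j)
      simp only [Matrix.mulVec.addMonoidHomLeft] at h
      simp only [AddMonoidHom.coe_mk, ZeroHom.coe_mk] at h
      rw [h]
      simp only [dotProduct, Finset.sum_apply, Finset.mul_sum]
      exact Finset.sum_comm
    rw [hsum]
    refine Finset.sum_pos' (fun i _ => ?_) ⟨i0, Finset.mem_erase.mpr ⟨hi0j, Finset.mem_univ _⟩, ?_⟩
    · have := (hD i).1.dotProduct_mulVec_nonneg x
      simpa using this
    · exact key (Ki i0) (D i0) (hD i0) x k hi0k hk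
end

section
/- If some security k ∈ K is accessible to exactly two traders (|I_k| = 2), then there exists no fixed point (X*_i)_{i∈I} of the system X*_i = (B_i^{-H_i} + π_i (X*_{-i})⁻¹ π_i)^{-H_i} with each X*_i strictly positive definite on H_i; i.e., no Nash equilibrium in negative demand slopes exists. -/
set_option linter.unusedSectionVars false


open Matrix BigOperators Filter Topology

section Aux

variable {K : Type*} [Fintype K] [DecidableEq K]

lemma dot_psd {M : Matrix K K ℝ} (h : M.PosSemidef) (x : K → ℝ) :
    0 ≤ x ⬝ᵥ (M *ᵥ x) := by simpa using h.dotProduct_mulVec_nonneg x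

lemma dot_pd {M : Matrix K K ℝ} (h : M.PosDef) {x : K → ℝ} (hx : x ≠ 0) :
    0 < x ⬝ᵥ (M *ᵥ x) := by simpa using h.dotProduct_mulVec_pos hx

lemma symm_dot {M : Matrix K K ℝ} (h : M.IsHermitian) (x y : K → ℝ) :
    x ⬝ᵥ (M *ᵥ y) = (M *ᵥ x) ⬝ᵥ y := by
  have ht : Mᵀ = M := by
    ext l m
    have := congrFun (congrFun h.eq l) m
    simpa [Matrix.conjTranspose_apply] using this
  rw [Matrix.dotProduct_mulVec, ← Matrix.mulVec_transpose, ht]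

lemma proj_mulVec (S : Finset K) (x : K → ℝ) :
    proj K S *ᵥ x = fun l => if l ∈ S then x l else 0 := by
  funext l
  simp [proj, Matrix.mulVec_diagonal, ite_mul]

lemma dot_proj (S : Finset K) (x y : K → ℝ) :
    x ⬝ᵥ (proj K S *ᵥ y) = (proj K S *ᵥ x) ⬝ᵥ y := by
  simp only [proj_mulVec, dotProduct]
  refine Finset.sum_congr rfl fun l _ => ?_
  split_ifs <;> ring

lemma dot_sandwich (S : Finset K) (M : Matrix K K ℝ) (x y : K → ℝ) :
    x ⬝ᵥ ((proj K S * M * proj K S) *ᵥ y)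
      = (proj K S *ᵥ x) ⬝ᵥ (M *ᵥ (proj K S *ᵥ y)) := by
  rw [← Matrix.mulVec_mulVec, ← Matrix.mulVec_mulVec, dot_proj]

lemma proj_quad_nonneg (S : Finset K) (x : K → ℝ) :
    0 ≤ x ⬝ᵥ (proj K S *ᵥ x) := by
  simp only [proj_mulVec, dotProduct]
  refine Finset.sum_nonneg fun l _ => ?_
  split_ifs <;> nlinarith [sq_nonneg (x l)]

lemma proj_quad_pos (S : Finset K) (x : K → ℝ) {l : K} (hl : l ∈ S) (hx : x l ≠ 0) :
    0 < x ⬝ᵥ (proj K S *ᵥ x) := by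
  simp only [proj_mulVec, dotProduct]
  refine Finset.sum_pos' (fun m _ => by split_ifs <;> nlinarith [sq_nonneg (x m)]) ⟨l, Finset.mem_univ l, ?_⟩
  simp only [hl, if_pos]
  exact mul_self_pos.mpr hx

lemma isHermitian_proj (S : Finset K) : (proj K S).IsHermitian := by
  exact Matrix.isHermitian_diagonal _

/-- variational inequality -/
lemma var_ineq {M : Matrix K K ℝ} (hM : M.PosDef) (v u : K → ℝ) :
    2 * (v ⬝ᵥ u) - u ⬝ᵥ (M *ᵥ u) ≤ v ⬝ᵥ (M⁻¹ *ᵥ v) := by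
  have hdet : IsUnit M.det := (Matrix.isUnit_iff_isUnit_det _).mp hM.isUnit
  set w := M⁻¹ *ᵥ v with hw
  have hMw : M *ᵥ w = v := by
    rw [hw, Matrix.mulVec_mulVec, Matrix.mul_nonsing_inv _ hdet, Matrix.one_mulVec]
  have h0 : 0 ≤ (u - w) ⬝ᵥ (M *ᵥ (u - w)) := dot_psd hM.posSemidef _
  have hexp : (u - w) ⬝ᵥ (M *ᵥ (u - w))
      = u ⬝ᵥ (M *ᵥ u) - 2 * (v ⬝ᵥ u) + v ⬝ᵥ (M⁻¹ *ᵥ v) := by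
    rw [Matrix.mulVec_sub, dotProduct_sub, sub_dotProduct,
      sub_dotProduct, hMw]
    have h1 : u ⬝ᵥ v = v ⬝ᵥ u := dotProduct_comm _ _
    have h2 : w ⬝ᵥ (M *ᵥ u) = v ⬝ᵥ u := by
      rw [symm_dot hM.isHermitian, hMw]
    have h3 : w ⬝ᵥ v = v ⬝ᵥ (M⁻¹ *ᵥ v) := by
      rw [← hw, dotProduct_comm]
    linarith [h1, h2, h3]
  linarith [h0, hexp]

lemma spdOn_add_proj_posDef {S : Finset K} {B : Matrix K K ℝ} (hB : SPDOn S B) :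
    (B + proj K Sᶜ).PosDef := by
  obtain ⟨hpsd, hpd, hker⟩ := hB
  refine Matrix.PosDef.of_dotProduct_mulVec_pos (hpsd.1.add (isHermitian_proj _)) fun x hx => ?_
  simp only [star_trivial, Matrix.add_mulVec, dotProduct_add]
  have h1 : 0 ≤ x ⬝ᵥ (B *ᵥ x) := dot_psd hpsd x
  by_cases hsup : ∀ l, l ∉ S → x l = 0
  · have := hpd x hsup hx
    have h2 : 0 ≤ x ⬝ᵥ (proj K Sᶜ *ᵥ x) := proj_quad_nonneg _ _
    linarith
  · push_neg at hsup
    obtain ⟨l, hl, hxl⟩ := hsup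
    have h2 : 0 < x ⬝ᵥ (proj K Sᶜ *ᵥ x) :=
      proj_quad_pos _ _ (Finset.mem_compl.mpr hl) hxl
    linarith

lemma diag_eq (M : Matrix K K ℝ) (k : K) :
    M k k = Pi.single k 1 ⬝ᵥ (M *ᵥ Pi.single k 1) := by
  rw [single_dotProduct, Matrix.mulVec_single]
  simp

lemma sum_mulVec' {ι : Type*} (s : Finset ι) (f : ι → Matrix K K ℝ) (x : K → ℝ) :
    (∑ j ∈ s, f j) *ᵥ x = ∑ j ∈ s, (f j *ᵥ x) := by
  ext l
  simp [Matrix.mulVec, dotProduct, Finset.sum_apply, Finset.sum_mul, Matrix.sum_apply]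
  rw [Finset.sum_comm]

lemma dot_sum' {ι : Type*} (s : Finset ι) (f : ι → K → ℝ) (x : K → ℝ) :
    x ⬝ᵥ (∑ j ∈ s, f j) = ∑ j ∈ s, x ⬝ᵥ f j := by
  simp only [dotProduct, Finset.sum_apply, Finset.mul_sum]
  rw [Finset.sum_comm]

end Aux

section Main

variable {I K : Type*} [Fintype I] [DecidableEq I] [Fintype K] [DecidableEq K]

/-- Quadratic form of an `SPDOn` matrix only sees the restriction to `S`. -/
lemma spdOn_quad_restrict {S : Finset K} {M : Matrix K K ℝ} (hM : SPDOn S M)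
    (x : K → ℝ) :
    x ⬝ᵥ (M *ᵥ x) = (fun m => if m ∈ S then x m else 0) ⬝ᵥ
      (M *ᵥ (fun m => if m ∈ S then x m else 0)) := by
  set xp : K → ℝ := fun m => if m ∈ S then x m else 0 with hxp
  have hker : M *ᵥ (x - xp) = 0 := by
    apply hM.2.2
    intro m hm
    simp [hxp, hm]
  rw [Matrix.mulVec_sub, sub_eq_zero] at hker
  calc x ⬝ᵥ (M *ᵥ x) = x ⬝ᵥ (M *ᵥ xp) := by rw [hker]
    _ = (M *ᵥ x) ⬝ᵥ xp := symm_dot hM.1.1 x xp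
    _ = (M *ᵥ xp) ⬝ᵥ xp := by rw [hker]
    _ = xp ⬝ᵥ (M *ᵥ xp) := dotProduct_comm _ _

lemma Y_posDef (Ki : I → Finset K)
    (hacc : ∀ k : K, 2 ≤ (Finset.univ.filter (fun i : I => k ∈ Ki i)).card)
    (X : I → Matrix K K ℝ) (hX : ∀ i, SPDOn (Ki i) (X i)) (i : I) :
    (∑ j ∈ Finset.univ.erase i, X j).PosDef := by
  refine Matrix.PosDef.of_dotProduct_mulVec_pos ?_ ?_
  · rw [Matrix.IsHermitian, Matrix.conjTranspose_sum]
    exact Finset.sum_congr rfl fun j _ => (hX j).1.1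
  · intro x hx
    simp only [star_trivial]
    rw [sum_mulVec', dot_sum']
    obtain ⟨l, hl⟩ := Function.ne_iff.mp hx
    have h2 : 1 < (Finset.univ.filter (fun i : I => l ∈ Ki i)).card := by
      have := hacc l; omega
    obtain ⟨j, hjmem, hji⟩ := (Finset.one_lt_card_iff_nontrivial.mp h2).exists_ne i
    have hlj : l ∈ Ki j := (Finset.mem_filter.mp hjmem).2
    refine Finset.sum_pos' (fun m _ => dot_psd (hX m).1 x) ⟨j, Finset.mem_erase.mpr ⟨hji, Finset.mem_univ j⟩, ?_⟩
    rw [spdOn_quad_restrict (hX j) x]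
    refine (hX j).2.1 _ (fun m hm => by simp [hm]) ?_
    intro h0
    have := congrFun h0 l
    simp only [hlj, if_pos] at this
    exact hl (by simpa using this)

lemma key_diag_lt (Ki : I → Finset K)
    (hacc : ∀ k : K, 2 ≤ (Finset.univ.filter (fun i : I => k ∈ Ki i)).card)
    (B : I → Matrix K K ℝ) (hB : ∀ i, SPDOn (Ki i) (B i))
    (X : I → Matrix K K ℝ) (hX : ∀ i, SPDOn (Ki i) (X i))
    (hfix : ∀ i, X i = Fmap Ki B X i)
    (i : I) (k : K) (hki : k ∈ Ki i) :
    X i k k < (∑ j ∈ Finset.univ.erase i, X j) k k := by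
  set S := Ki i with hS
  set Y := ∑ j ∈ Finset.univ.erase i, X j with hY
  have hYpd : Y.PosDef := Y_posDef Ki hacc X hX i
  have hYdet : IsUnit Y.det := (Matrix.isUnit_iff_isUnit_det _).mp hYpd.isUnit
  have hYinv : (Y⁻¹).PosDef := hYpd.inv
  have hNpd : ((B i + proj K Sᶜ)⁻¹).PosDef := (spdOn_add_proj_posDef (hB i)).inv
  set N := (B i + proj K Sᶜ)⁻¹ with hN
  set A := (invOn S (B i) + proj K S * Y⁻¹ * proj K S) + proj K Sᶜ with hA
  -- A is positive definite
  have quadA : ∀ x : K → ℝ, x ⬝ᵥ (A *ᵥ x)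
      = (proj K S *ᵥ x) ⬝ᵥ (N *ᵥ (proj K S *ᵥ x))
        + (proj K S *ᵥ x) ⬝ᵥ (Y⁻¹ *ᵥ (proj K S *ᵥ x))
        + x ⬝ᵥ (proj K Sᶜ *ᵥ x) := by
    intro x
    rw [hA, Matrix.add_mulVec, Matrix.add_mulVec, dotProduct_add, dotProduct_add]
    rw [invOn, dot_sandwich, dot_sandwich]
  have hApd : A.PosDef := by
    refine Matrix.PosDef.of_dotProduct_mulVec_pos ?_ ?_
    · refine (Matrix.IsHermitian.add ?_ ?_).add (isHermitian_proj _)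
      · rw [invOn, Matrix.IsHermitian, Matrix.conjTranspose_mul, Matrix.conjTranspose_mul,
          (isHermitian_proj (K := K) S).eq, hNpd.1.eq, Matrix.mul_assoc]
      · rw [Matrix.IsHermitian, Matrix.conjTranspose_mul, Matrix.conjTranspose_mul,
          (isHermitian_proj (K := K) S).eq, hYinv.1.eq, Matrix.mul_assoc]
    · intro x hx
      simp only [star_trivial]
      rw [quadA x]
      by_cases hp : proj K S *ᵥ x = 0
      · have hx1 : x ⬝ᵥ (proj K Sᶜ *ᵥ x) > 0 := by
          have : ∃ l, l ∉ S ∧ x l ≠ 0 := by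
            by_contra hcon
            push_neg at hcon
            apply hx
            funext l
            by_cases hlS : l ∈ S
            · have := congrFun hp l
              simpa [proj_mulVec, hlS] using this
            · exact hcon l hlS
          obtain ⟨l, hl, hxl⟩ := this
          exact proj_quad_pos _ _ (Finset.mem_compl.mpr hl) hxl
        rw [hp]
        simpa using hx1
      · have h1 : 0 < (proj K S *ᵥ x) ⬝ᵥ (N *ᵥ (proj K S *ᵥ x)) := dot_pd hNpd hp
        have h2 : 0 ≤ (proj K S *ᵥ x) ⬝ᵥ (Y⁻¹ *ᵥ (proj K S *ᵥ x)) := dot_psd hYinv.posSemidef _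
        have h3 : 0 ≤ x ⬝ᵥ (proj K Sᶜ *ᵥ x) := proj_quad_nonneg _ _
        linarith
  have hAdet : IsUnit A.det := (Matrix.isUnit_iff_isUnit_det _).mp hApd.isUnit
  -- fixed point gives X i = π A⁻¹ π
  have hXi : X i = proj K S * A⁻¹ * proj K S := by
    rw [hfix i]
    rfl
  -- the test vector
  set v : K → ℝ := Pi.single k 1 with hv
  have hv0 : v ≠ 0 := by
    intro h
    have := congrFun h k
    simp [hv] at this
  have hπv : proj K S *ᵥ v = v := by
    funext l
    rw [proj_mulVec]
    by_cases hlS : l ∈ S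
    · simp [hlS]
    · have : l ≠ k := fun h => hlS (h ▸ hki)
      simp [hlS, hv, Pi.single_apply, this]
  set w : K → ℝ := A⁻¹ *ᵥ v with hw
  have hAw : A *ᵥ w = v := by
    rw [hw, Matrix.mulVec_mulVec, Matrix.mul_nonsing_inv _ hAdet, Matrix.one_mulVec]
  set p : K → ℝ := proj K S *ᵥ w with hp
  -- X i k k = v ⬝ w
  have hXikk : X i k k = v ⬝ᵥ w := by
    rw [hXi, diag_eq (proj K S * A⁻¹ * proj K S) k, ← hv, dot_sandwich, hπv, ← hw]
  have hvw : v ⬝ᵥ w = w ⬝ᵥ (A *ᵥ w) := by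
    rw [hAw]
    exact dotProduct_comm _ _
  -- v ⬝ w = v ⬝ p  (both equal w k resp. p k = w k)
  have hpk : p k = w k := by
    rw [hp, proj_mulVec]
    simp [hki]
  have hvw_vp : v ⬝ᵥ w = v ⬝ᵥ p := by
    rw [hv, single_dotProduct, single_dotProduct, hpk]
  -- p ≠ 0
  have hpne : p ≠ 0 := by
    intro h0
    have hquad := quadA w
    rw [← hp, h0] at hquad
    simp only [Matrix.mulVec_zero, dotProduct_zero, zero_dotProduct, zero_add] at hquad
    -- then v ⬝ w = w ⬝ A w  = proj-term, but v ⬝ w = w k = p k = 0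
    have hwk : w k = 0 := by rw [← hpk, h0]; simp
    have hvw0 : v ⬝ᵥ w = 0 := by rw [hv, single_dotProduct, hwk]; ring
    have hw0 : w ≠ 0 := by
      intro hww
      apply hv0
      rw [← hAw, hww, Matrix.mulVec_zero]
    have := dot_pd hApd hw0
    rw [← hvw, hvw0] at this
    exact lt_irrefl 0 this
  have hNpos : 0 < p ⬝ᵥ (N *ᵥ p) := dot_pd hNpd hpne
  have hprojnn : 0 ≤ w ⬝ᵥ (proj K Sᶜ *ᵥ w) := proj_quad_nonneg _ _
  -- variational bound
  have hvar : 2 * (v ⬝ᵥ p) - p ⬝ᵥ (Y⁻¹ *ᵥ p) ≤ v ⬝ᵥ (Y *ᵥ v) := by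
    have := var_ineq hYinv v p
    rwa [Matrix.nonsing_inv_nonsing_inv _ hYdet] at this
  have hYkk : Y k k = v ⬝ᵥ (Y *ᵥ v) := by rw [diag_eq Y k, ← hv]
  have hquadw := quadA w
  rw [← hp] at hquadw
  -- assemble
  rw [hXikk, hYkk]
  have : v ⬝ᵥ w = p ⬝ᵥ (N *ᵥ p) + p ⬝ᵥ (Y⁻¹ *ᵥ p) + w ⬝ᵥ (proj K Sᶜ *ᵥ w) := by
    rw [hvw, hquadw]
  linarith [hvar, hNpos, hprojnn, this, hvw_vp]

end Main


/-- If some security is accessible to exactly two traders, there is no Nash equilibrium,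
i.e. no fixed point of the best-response map with each component in `S_≻^{H_i}`. -/
theorem stmt_4 {I K : Type*} [Fintype I] [DecidableEq I] [Fintype K] [DecidableEq K]
    (Ki : I → Finset K)
    (hacc : ∀ k : K, 2 ≤ (Finset.univ.filter (fun i : I => k ∈ Ki i)).card)
    (B : I → Matrix K K ℝ) (hB : ∀ i, SPDOn (Ki i) (B i))
    (k : K) (hk : (Finset.univ.filter (fun i : I => k ∈ Ki i)).card = 2) :
    ¬ ∃ X : I → Matrix K K ℝ,
        (∀ i, SPDOn (Ki i) (X i)) ∧ (∀ i, X i = Fmap Ki B X i) := by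
  rintro ⟨X, hXspd, hfix⟩
  obtain ⟨i, j, hij, hset⟩ := Finset.card_eq_two.mp hk
  have hmem : ∀ m : I, k ∈ Ki m ↔ m = i ∨ m = j := by
    intro m
    constructor
    · intro hm
      have hmm : m ∈ ({i, j} : Finset I) := by
        rw [← hset]
        exact Finset.mem_filter.mpr ⟨Finset.mem_univ m, hm⟩
      simpa using hmm
    · rintro (rfl | rfl)
      · have h1 : m ∈ ({m, j} : Finset I) := by simp
        rw [← hset] at h1
        exact (Finset.mem_filter.mp h1).2
      · have h1 : m ∈ ({i, m} : Finset I) := by simp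
        rw [← hset] at h1
        exact (Finset.mem_filter.mp h1).2
  have hik : k ∈ Ki i := (hmem i).mpr (Or.inl rfl)
  have hjk : k ∈ Ki j := (hmem j).mpr (Or.inr rfl)
  have hzero : ∀ m, k ∉ Ki m → X m k k = 0 := by
    intro m hm
    have h3 := (hXspd m).2.2 (Pi.single k 1) (fun l hl => by
      rcases eq_or_ne l k with rfl | hne
      · exact absurd hl hm
      · simp [Pi.single_apply, hne])
    have h4 := congrFun h3 k
    rw [Matrix.mulVec_single] at h4
    simpa using h4
  have hsum : ∀ a b : I, a ≠ b → ((a = i ∧ b = j) ∨ (a = j ∧ b = i)) →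
      (∑ m ∈ Finset.univ.erase a, X m) k k = X b k k := by
    intro a b hab hcase
    rw [Matrix.sum_apply]
    refine Finset.sum_eq_single_of_mem b
      (Finset.mem_erase.mpr ⟨fun h => hab h.symm, Finset.mem_univ b⟩) ?_
    intro m hmE hmb
    have hma : m ≠ a := (Finset.mem_erase.mp hmE).1
    apply hzero
    intro hkm
    rcases (hmem m).mp hkm with rfl | rfl
    · rcases hcase with ⟨rfl, rfl⟩ | ⟨rfl, rfl⟩
      · exact hma rfl
      · exact hmb rfl
    · rcases hcase with ⟨rfl, rfl⟩ | ⟨rfl, rfl⟩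
      · exact hmb rfl
      · exact hma rfl
  have h1 := key_diag_lt Ki hacc B hB X hXspd hfix i k hik
  have h2 := key_diag_lt Ki hacc B hB X hXspd hfix j k hjk
  rw [hsum i j hij (Or.inl ⟨rfl, rfl⟩)] at h1
  rw [hsum j i hij.symm (Or.inr ⟨rfl, rfl⟩)] at h2
  linarith
end

section
/- The map F defined coordinatewise by F_i(X) = (B_i^{-H_i} + π_i (X_{-i})⁻¹ π_i)^{-H_i} is monotone nondecreasing: if X_i ⪯ Y_i for all i ∈ I, then F_i(X) ⪯ F_i(Y) for all i ∈ I. -/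
open Matrix BigOperators Filter Topology

section Aux

set_option linter.unusedSectionVars false

variable {K : Type*} [Fintype K] [DecidableEq K]

lemma transpose_eq_of_isHermitian {A : Matrix K K ℝ} (h : A.IsHermitian) : Aᵀ = A :=
  (by simpa using congrArg Matrix.transpose h : A = Aᵀ).symm

lemma proj_conjTranspose (S : Finset K) : (proj K S)ᴴ = proj K S := by
  simp [proj, Matrix.diagonal_conjTranspose]

lemma proj_posSemidef (S : Finset K) : (proj K S).PosSemidef :=
  Matrix.PosSemidef.diagonal (fun k => by dsimp only; split <;> norm_num)

/-- The quadratic form of an `SPDOn` matrix only sees the projected vector. -/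
lemma SPDOn.quad_eq {S : Finset K} {A : Matrix K K ℝ} (hA : SPDOn S A) (x : K → ℝ) :
    x ⬝ᵥ A *ᵥ x =
      (fun k => if k ∈ S then x k else 0) ⬝ᵥ A *ᵥ (fun k => if k ∈ S then x k else 0) := by
  set u : K → ℝ := fun k => if k ∈ S then x k else 0 with hu
  set v : K → ℝ := x - u with hv
  have hAv : A *ᵥ v = 0 := hA.2.2 v (by intro j hj; simp [hv, hu, hj])
  have hx : x = u + v := by simp [hv]
  have hAT : Aᵀ = A := transpose_eq_of_isHermitian hA.1.1
  calc x ⬝ᵥ A *ᵥ x = (u + v) ⬝ᵥ A *ᵥ (u + v) := by rw [← hx]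
    _ = u ⬝ᵥ A *ᵥ u + v ⬝ᵥ A *ᵥ u := by
        rw [Matrix.mulVec_add, hAv, add_zero, add_dotProduct]
    _ = u ⬝ᵥ A *ᵥ u := by
        have hvu : v ⬝ᵥ A *ᵥ u = (A *ᵥ v) ⬝ᵥ u := by
          rw [Matrix.dotProduct_mulVec, ← Matrix.mulVec_transpose, hAT]
        rw [hvu, hAv, zero_dotProduct, add_zero]

lemma SPDOn.quad_pos {S : Finset K} {A : Matrix K K ℝ} (hA : SPDOn S A) {x : K → ℝ}
    (h : ∃ k ∈ S, x k ≠ 0) : 0 < x ⬝ᵥ A *ᵥ x := by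
  rw [hA.quad_eq]
  obtain ⟨k, hkS, hxk⟩ := h
  refine hA.2.1 _ (fun j hj => if_neg hj) ?_
  intro h0
  apply hxk
  simpa [hkS] using congrFun h0 k

lemma quad_proj_compl (S : Finset K) (x : K → ℝ) :
    x ⬝ᵥ proj K Sᶜ *ᵥ x = ∑ k, (if k ∈ S then 0 else x k * x k) := by
  simp only [proj, dotProduct, Matrix.mulVec_diagonal, Finset.mem_compl]
  refine Finset.sum_congr rfl fun k _ => ?_
  by_cases hk : k ∈ S <;> simp [hk]

/-- Adding the complementary projection makes things positive definite. -/
lemma posDef_add_proj_compl {S : Finset K} {M : Matrix K K ℝ} (hM : M.PosSemidef)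
    (h : ∀ x : K → ℝ, (∃ k ∈ S, x k ≠ 0) → 0 < x ⬝ᵥ M *ᵥ x) :
    (M + proj K Sᶜ).PosDef := by
  refine PosDef.of_dotProduct_mulVec_pos (hM.1.add (proj_posSemidef Sᶜ).1) fun x hx => ?_
  simp only [star_trivial, Matrix.add_mulVec, dotProduct_add]
  by_cases hc : ∃ k ∈ S, x k ≠ 0
  · have h1 := h x hc
    have h2 := (proj_posSemidef Sᶜ).dotProduct_mulVec_nonneg x
    simp only [star_trivial] at h2
    linarith
  · push_neg at hc
    have h1 : 0 ≤ x ⬝ᵥ M *ᵥ x := by simpa using hM.dotProduct_mulVec_nonneg x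
    obtain ⟨k0, hk0⟩ := Function.ne_iff.mp hx
    have hk0S : k0 ∉ S := fun hmem => hk0 (hc k0 hmem)
    have h2 : 0 < x ⬝ᵥ proj K Sᶜ *ᵥ x := by
      rw [quad_proj_compl]
      refine Finset.sum_pos'
        (fun k _ => by by_cases hk : k ∈ S <;> simp [hk, mul_self_nonneg])
        ⟨k0, Finset.mem_univ _, ?_⟩
      simp only [hk0S, if_false]
      exact mul_self_pos.mpr (by simpa using hk0)
    linarith

lemma posDef_of_posSemidef_isUnitDet {A : Matrix K K ℝ} (hA : A.PosSemidef)
    (h : IsUnit A.det) : A.PosDef := by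
  refine PosDef.of_dotProduct_mulVec_pos hA.1 fun x hx => ?_
  rcases lt_or_eq_of_le (hA.dotProduct_mulVec_nonneg x) with hlt | heq
  · simpa using hlt
  · exfalso
    apply hx
    have h0 : A *ᵥ x = 0 := (hA.dotProduct_mulVec_zero_iff x).mp heq.symm
    have := congrArg (fun y => A⁻¹ *ᵥ y) h0
    simpa [Matrix.mulVec_mulVec, Matrix.nonsing_inv_mul _ h] using this

open scoped MatrixOrder in
noncomputable def Matrix.PosSemidef.sqrt {A : Matrix K K ℝ} (_ : A.PosSemidef) : Matrix K K ℝ :=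
  CFC.sqrt A

open scoped MatrixOrder in
lemma Matrix.PosSemidef.posSemidef_sqrt {A : Matrix K K ℝ} (hA : A.PosSemidef) :
    hA.sqrt.PosSemidef :=
  (CFC.sqrt_nonneg A).posSemidef

open scoped MatrixOrder in
lemma Matrix.PosSemidef.sqrt_mul_self {A : Matrix K K ℝ} (hA : A.PosSemidef) :
    hA.sqrt * hA.sqrt = A :=
  CFC.sqrt_mul_sqrt_self A hA.nonneg

lemma sqrt_posDef {A : Matrix K K ℝ} (hA : A.PosDef) : hA.posSemidef.sqrt.PosDef := by
  refine posDef_of_posSemidef_isUnitDet hA.posSemidef.posSemidef_sqrt ?_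
  have hdet : hA.posSemidef.sqrt.det * hA.posSemidef.sqrt.det = A.det := by
    rw [← Matrix.det_mul, hA.posSemidef.sqrt_mul_self]
  rw [isUnit_iff_ne_zero]
  intro h0
  have := hA.det_pos
  rw [← hdet, h0, mul_zero] at this
  exact lt_irrefl _ this

/-- Matrix inversion is antitone w.r.t. the Loewner order on positive definite matrices. -/
lemma inv_sub_inv_posSemidef {A B : Matrix K K ℝ} (hA : A.PosDef) (hB : B.PosDef)
    (hAB : (B - A).PosSemidef) : (A⁻¹ - B⁻¹).PosSemidef := by
  set R : Matrix K K ℝ := hB.posSemidef.sqrt with hRdef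
  have hR : R.PosDef := sqrt_posDef hB
  have hRR : R * R = B := hB.posSemidef.sqrt_mul_self
  haveI : Invertible R := R.invertibleOfIsUnitDet (isUnit_iff_ne_zero.mpr hR.det_pos.ne')
  haveI : Invertible A := A.invertibleOfIsUnitDet (isUnit_iff_ne_zero.mpr hA.det_pos.ne')
  have hRiH : (R⁻¹)ᴴ = R⁻¹ := by
    rw [Matrix.conjTranspose_nonsing_inv, hR.isHermitian.eq]
  set C : Matrix K K ℝ := R⁻¹ * A * R⁻¹ with hCdef
  have hCpsd : C.PosSemidef := by
    have := hA.posSemidef.mul_mul_conjTranspose_same R⁻¹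
    rwa [hRiH] at this
  have hC : C.PosDef := by
    refine posDef_of_posSemidef_isUnitDet hCpsd (isUnit_iff_ne_zero.mpr ?_)
    rw [hCdef, Matrix.det_mul, Matrix.det_mul, Matrix.det_nonsing_inv, Ring.inverse_eq_inv]
    exact mul_ne_zero (mul_ne_zero (inv_ne_zero hR.det_pos.ne') hA.det_pos.ne')
      (inv_ne_zero hR.det_pos.ne')
  have hIC : ((1 : Matrix K K ℝ) - C).PosSemidef := by
    have hps := hAB.mul_mul_conjTranspose_same R⁻¹
    rw [hRiH] at hps
    have key : R⁻¹ * (B - A) * R⁻¹ = 1 - C := by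
      rw [Matrix.mul_sub, Matrix.sub_mul, hCdef, ← hRR,
        Matrix.inv_mul_cancel_left_of_invertible, Matrix.mul_inv_of_invertible]
    rwa [key] at hps
  set T : Matrix K K ℝ := hC.posSemidef.sqrt with hTdef
  have hT : T.PosDef := sqrt_posDef hC
  have hTT : T * T = C := hC.posSemidef.sqrt_mul_self
  haveI : Invertible T := T.invertibleOfIsUnitDet (isUnit_iff_ne_zero.mpr hT.det_pos.ne')
  have hTiH : (T⁻¹)ᴴ = T⁻¹ := by
    rw [Matrix.conjTranspose_nonsing_inv, hT.isHermitian.eq]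
  have hC1 : (C⁻¹ - 1).PosSemidef := by
    have hps := hIC.mul_mul_conjTranspose_same T⁻¹
    rw [hTiH] at hps
    have key : T⁻¹ * (1 - C) * T⁻¹ = C⁻¹ - 1 := by
      rw [Matrix.mul_sub, Matrix.sub_mul, Matrix.mul_one, ← Matrix.mul_inv_rev, hTT,
        ← hTT, Matrix.inv_mul_cancel_left_of_invertible, Matrix.mul_inv_of_invertible]
    rwa [key] at hps
  have hps := hC1.mul_mul_conjTranspose_same R⁻¹
  rw [hRiH] at hps
  have key : R⁻¹ * (C⁻¹ - 1) * R⁻¹ = A⁻¹ - B⁻¹ := by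
    rw [Matrix.mul_sub, Matrix.sub_mul, Matrix.mul_one]
    congr 1
    · rw [hCdef, Matrix.mul_inv_rev, Matrix.mul_inv_rev, Matrix.inv_inv_of_invertible]
      simp [Matrix.mul_assoc]
    · rw [← Matrix.mul_inv_rev, hRR]
  rwa [key] at hps

lemma posSemidef_sum {ι : Type*} (s : Finset ι) (f : ι → Matrix K K ℝ)
    (h : ∀ j ∈ s, (f j).PosSemidef) : (∑ j ∈ s, f j).PosSemidef :=
  Finset.sum_induction f _ (fun _ _ ha hb => ha.add hb) .zero h

lemma quad_sum {ι : Type*} (s : Finset ι) (f : ι → Matrix K K ℝ) (x : K → ℝ) :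
    x ⬝ᵥ (∑ j ∈ s, f j) *ᵥ x = ∑ j ∈ s, x ⬝ᵥ f j *ᵥ x := by
  classical
  induction s using Finset.induction with
  | empty => simp
  | insert _ _ h ih =>
      rw [Finset.sum_insert h, Finset.sum_insert h, Matrix.add_mulVec,
        dotProduct_add, ih]

lemma sum_erase_posDef {I : Type*} [Fintype I] [DecidableEq I] (Ki : I → Finset K)
    (hacc : ∀ k : K, 2 ≤ (Finset.univ.filter (fun i : I => k ∈ Ki i)).card)
    (X : I → Matrix K K ℝ) (hX : ∀ i, SPDOn (Ki i) (X i)) (i : I) :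
    (∑ j ∈ Finset.univ.erase i, X j).PosDef := by
  refine PosDef.of_dotProduct_mulVec_pos (posSemidef_sum _ _ (fun j _ => (hX j).1)).1 fun x hx => ?_
  rw [star_trivial, quad_sum]
  obtain ⟨k0, hk0⟩ := Function.ne_iff.mp hx
  obtain ⟨a, ha, b, hb, hab⟩ :=
    Finset.one_lt_card.mp (lt_of_lt_of_le one_lt_two (hacc k0))
  have hj0 : ∃ j0, j0 ≠ i ∧ k0 ∈ Ki j0 := by
    rcases eq_or_ne a i with rfl | hai
    · exact ⟨b, hab.symm, (Finset.mem_filter.mp hb).2⟩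
    · exact ⟨a, hai, (Finset.mem_filter.mp ha).2⟩
  obtain ⟨j0, hj0i, hj0k⟩ := hj0
  refine Finset.sum_pos' (fun j _ => by simpa using (hX j).1.dotProduct_mulVec_nonneg x)
    ⟨j0, Finset.mem_erase.mpr ⟨hj0i, Finset.mem_univ _⟩, ?_⟩
  exact (hX j0).quad_pos ⟨k0, hj0k, by simpa using hk0⟩

lemma proj_quad (S : Finset K) (N : Matrix K K ℝ) (x : K → ℝ) :
    x ⬝ᵥ (proj K S * N * proj K S) *ᵥ x = (proj K S *ᵥ x) ⬝ᵥ N *ᵥ (proj K S *ᵥ x) := by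
  rw [← Matrix.mulVec_mulVec, ← Matrix.mulVec_mulVec,
    Matrix.dotProduct_mulVec x (proj K S)]
  congr 1
  rw [← Matrix.mulVec_transpose]
  congr 1
  simp [proj, Matrix.diagonal_transpose]

lemma proj_conj_posSemidef {S : Finset K} {M : Matrix K K ℝ} (hM : M.PosSemidef) :
    (proj K S * M * proj K S).PosSemidef := by
  have := hM.mul_mul_conjTranspose_same (proj K S)
  rwa [proj_conjTranspose] at this

lemma SPDOn.add_proj_compl_posDef {S : Finset K} {A : Matrix K K ℝ} (hA : SPDOn S A) :
    (A + proj K Sᶜ).PosDef :=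
  posDef_add_proj_compl hA.1 (fun _ hx => hA.quad_pos hx)

lemma invOn_posSemidef {S : Finset K} {A : Matrix K K ℝ} (hA : SPDOn S A) :
    (invOn S A).PosSemidef :=
  proj_conj_posSemidef hA.add_proj_compl_posDef.inv.posSemidef

lemma M_add_proj_compl_posDef {S : Finset K} {A Z : Matrix K K ℝ}
    (hA : SPDOn S A) (hZ : Z.PosDef) :
    ((invOn S A + proj K S * Z⁻¹ * proj K S) + proj K Sᶜ).PosDef := by
  refine posDef_add_proj_compl
    ((invOn_posSemidef hA).add (proj_conj_posSemidef hZ.inv.posSemidef)) ?_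
  rintro x ⟨k, hkS, hxk⟩
  have h1 : 0 ≤ x ⬝ᵥ invOn S A *ᵥ x := by simpa using (invOn_posSemidef hA).dotProduct_mulVec_nonneg x
  have h2 : 0 < x ⬝ᵥ (proj K S * Z⁻¹ * proj K S) *ᵥ x := by
    rw [proj_quad]
    have hPx : proj K S *ᵥ x ≠ 0 := by
      intro h0
      apply hxk
      simpa [proj, Matrix.mulVec_diagonal, hkS] using congrFun h0 k
    simpa using hZ.inv.dotProduct_mulVec_pos hPx
  rw [Matrix.add_mulVec, dotProduct_add]
  linarith

end Aux

/-- The best-response map `F` is monotone nondecreasing in the componentwise Loewner order. -/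
theorem stmt_5 {I K : Type*} [Fintype I] [DecidableEq I] [Fintype K] [DecidableEq K]
    (Ki : I → Finset K)
    (hacc : ∀ k : K, 2 ≤ (Finset.univ.filter (fun i : I => k ∈ Ki i)).card)
    (B : I → Matrix K K ℝ) (hB : ∀ i, SPDOn (Ki i) (B i))
    (X Y : I → Matrix K K ℝ)
    (hX : ∀ i, SPDOn (Ki i) (X i)) (hY : ∀ i, SPDOn (Ki i) (Y i))
    (hXY : ∀ i, (Y i - X i).PosSemidef) :
    ∀ i, (Fmap Ki B Y i - Fmap Ki B X i).PosSemidef := by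
  intro i
  set S : Finset K := Ki i with hS
  set P : Matrix K K ℝ := proj K S with hP
  set Q : Matrix K K ℝ := proj K Sᶜ with hQ
  set ZX : Matrix K K ℝ := ∑ j ∈ Finset.univ.erase i, X j with hZXdef
  set ZY : Matrix K K ℝ := ∑ j ∈ Finset.univ.erase i, Y j with hZYdef
  have hZX : ZX.PosDef := sum_erase_posDef Ki hacc X hX i
  have hZY : ZY.PosDef := sum_erase_posDef Ki hacc Y hY i
  have hZdiff : (ZY - ZX).PosSemidef := by
    have h : ZY - ZX = ∑ j ∈ Finset.univ.erase i, (Y j - X j) := by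
      rw [hZYdef, hZXdef, Finset.sum_sub_distrib]
    rw [h]
    exact posSemidef_sum _ _ (fun j _ => hXY j)
  have hinv : (ZX⁻¹ - ZY⁻¹).PosSemidef := inv_sub_inv_posSemidef hZX hZY hZdiff
  set MX : Matrix K K ℝ := invOn S (B i) + P * ZX⁻¹ * P with hMXdef
  set MY : Matrix K K ℝ := invOn S (B i) + P * ZY⁻¹ * P with hMYdef
  have hMXQ : (MX + Q).PosDef := M_add_proj_compl_posDef (hB i) hZX
  have hMYQ : (MY + Q).PosDef := M_add_proj_compl_posDef (hB i) hZY
  have hMdiff : ((MX + Q) - (MY + Q)).PosSemidef := by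
    have h : (MX + Q) - (MY + Q) = P * (ZX⁻¹ - ZY⁻¹) * P := by
      rw [add_sub_add_right_eq_sub, hMXdef, hMYdef, add_sub_add_left_eq_sub,
        Matrix.mul_sub, Matrix.sub_mul]
    rw [h]
    exact proj_conj_posSemidef hinv
  have hfinal : ((MY + Q)⁻¹ - (MX + Q)⁻¹).PosSemidef :=
    inv_sub_inv_posSemidef hMYQ hMXQ hMdiff
  have hrepr : Fmap Ki B Y i - Fmap Ki B X i = P * ((MY + Q)⁻¹ - (MX + Q)⁻¹) * P := by
    rw [Matrix.mul_sub, Matrix.sub_mul]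
    rfl
  rw [hrepr]
  exact proj_conj_posSemidef hfinal
end

section
/- Along the line segment X(t) = X + tH (with H = X* − X ⪰ 0 componentwise and X a fixed point of F), the map Φ(t) = F(X(t)) is matrix-concave: −∂²Φ_i(t)/∂t² = 2 Φ_i(t) D_i(t) (X_{-i}(t) − Φ_i(t)) D_i(t) Φ_i(t) is positive semidefinite for each i, where D_i(t) = X_{-i}(t)⁻¹ H_{-i} X_{-i}(t)⁻¹. -/
open Matrix BigOperators Filter Topology

namespace Stmt9
variable {K : Type*} [Fintype K] [DecidableEq K]

lemma psd_nonneg {A : Matrix K K ℝ} (h : A.PosSemidef) (x : K → ℝ) :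
    0 ≤ x ⬝ᵥ (A *ᵥ x) := by simpa using h.dotProduct_mulVec_nonneg x

lemma pd_pos {A : Matrix K K ℝ} (h : A.PosDef) {x : K → ℝ} (hx : x ≠ 0) :
    0 < x ⬝ᵥ (A *ᵥ x) := by simpa using h.dotProduct_mulVec_pos hx

lemma herm_of_transpose {A : Matrix K K ℝ} (h : Aᵀ = A) : A.IsHermitian := by
  rwa [Matrix.IsHermitian, Matrix.conjTranspose_eq_transpose_of_trivial]

lemma transpose_of_herm {A : Matrix K K ℝ} (h : A.IsHermitian) : Aᵀ = A := by
  rwa [Matrix.IsHermitian, Matrix.conjTranspose_eq_transpose_of_trivial] at h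

/-- symmetric matrices move across the dot product -/
lemma dot_symm {A : Matrix K K ℝ} (h : Aᵀ = A) (x w : K → ℝ) :
    x ⬝ᵥ (A *ᵥ w) = (A *ᵥ x) ⬝ᵥ w := by
  rw [Matrix.dotProduct_mulVec, ← Matrix.mulVec_transpose, h]

lemma proj_transpose (S : Finset K) : (proj K S)ᵀ = proj K S := Matrix.diagonal_transpose _

lemma proj_conjTranspose (S : Finset K) : (proj K S)ᴴ = proj K S := by
  rw [Matrix.conjTranspose_eq_transpose_of_trivial, proj_transpose]

lemma proj_mulVec (S : Finset K) (x : K → ℝ) :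
    proj K S *ᵥ x = fun k => if k ∈ S then x k else 0 := by
  funext k; simp [proj, Matrix.mulVec_diagonal, ite_mul]

lemma proj_psd (S : Finset K) : (proj K S).PosSemidef := by
  refine Matrix.PosSemidef.diagonal ?_
  intro k; dsimp; split <;> norm_num

lemma quad_sum {ι : Type*} (s : Finset ι) (A : ι → Matrix K K ℝ) (x : K → ℝ) :
    x ⬝ᵥ ((∑ j ∈ s, A j) *ᵥ x) = ∑ j ∈ s, x ⬝ᵥ (A j *ᵥ x) := by
  classical
  induction s using Finset.cons_induction with
  | empty => simp
  | cons j s hj ih => simp [Finset.sum_insert hj, Matrix.add_mulVec, dotProduct_add, ih]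

/-- quadratic form of an `SPDOn` matrix only sees the projection onto `S`. -/
lemma spd_quad_eq {S : Finset K} {B : Matrix K K ℝ} (h : SPDOn S B) (x : K → ℝ) :
    x ⬝ᵥ (B *ᵥ x) = (proj K S *ᵥ x) ⬝ᵥ (B *ᵥ (proj K S *ᵥ x)) := by
  set u := proj K S *ᵥ x with hu
  have hv : ∀ j ∈ S, (x - u) j = 0 := by
    intro j hj; simp [hu, proj_mulVec, hj]
  have hBv : B *ᵥ (x - u) = 0 := h.2.2 _ hv
  have hBsym : Bᵀ = B := transpose_of_herm h.1.1
  have hBx : B *ᵥ x = B *ᵥ u := by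
    have h0 := Matrix.mulVec_add B u (x - u)
    have : u + (x - u) = x := by abel
    rw [this, hBv, add_zero] at h0
    exact h0
  rw [hBx]
  have : x ⬝ᵥ (B *ᵥ u) = u ⬝ᵥ (B *ᵥ u) + (x - u) ⬝ᵥ (B *ᵥ u) := by
    rw [← add_dotProduct]
    congr 1
    abel
  rw [this, dot_symm hBsym (x - u), hBv]
  simp

lemma spd_pos_of_proj_ne {S : Finset K} {B : Matrix K K ℝ} (h : SPDOn S B) {x : K → ℝ}
    (hx : proj K S *ᵥ x ≠ 0) : 0 < x ⬝ᵥ (B *ᵥ x) := by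
  rw [spd_quad_eq h]
  refine h.2.1 _ ?_ hx
  intro j hj; simp [proj_mulVec, hj]

lemma qQ_eq (S : Finset K) (x : K → ℝ) :
    x ⬝ᵥ (proj K Sᶜ *ᵥ x) = ∑ k, if k ∈ S then 0 else (x k)^2 := by
  rw [proj_mulVec]
  unfold dotProduct
  refine Finset.sum_congr rfl fun k _ => ?_
  by_cases hk : k ∈ S <;> simp [hk] <;> ring

lemma qQ_pos {S : Finset K} {x : K → ℝ} (hS : ∀ k ∈ S, x k = 0) (hx : x ≠ 0) :
    0 < x ⬝ᵥ (proj K Sᶜ *ᵥ x) := by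
  rw [qQ_eq]
  obtain ⟨k₀, hk₀⟩ := Function.ne_iff.mp hx
  have hk₀S : k₀ ∉ S := fun h => hk₀ (hS k₀ h)
  refine Finset.sum_pos' (fun k _ => by by_cases h : k ∈ S <;> simp [h] <;> positivity)
    ⟨k₀, Finset.mem_univ _, ?_⟩
  simp only [hk₀S, if_false]
  have hk : x k₀ ≠ 0 := by simpa using hk₀
  rcases hk.lt_or_gt with h | h <;> nlinarith

/-- `B + proj K Sᶜ` is positive definite when `B ∈ SPDOn S`. -/
lemma spd_add_proj_posDef {S : Finset K} {B : Matrix K K ℝ} (h : SPDOn S B) :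
    (B + proj K Sᶜ).PosDef := by
  refine Matrix.posDef_iff_dotProduct_mulVec.mpr ⟨?_, ?_⟩
  · exact h.1.1.add (proj_psd _).1
  · intro x hx
    simp only [star_trivial, Matrix.add_mulVec, dotProduct_add]
    by_cases hp : proj K S *ᵥ x = 0
    · have hS : ∀ k ∈ S, x k = 0 := by
        intro k hk
        have := congrFun hp k
        simpa [proj_mulVec, hk] using this
      have h1 : 0 ≤ x ⬝ᵥ (B *ᵥ x) := psd_nonneg h.1 x
      have h2 := qQ_pos hS hx
      linarith
    · have h1 := spd_pos_of_proj_ne h hp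
      have h2 : (0:ℝ) ≤ x ⬝ᵥ (proj K Sᶜ *ᵥ x) := psd_nonneg (proj_psd _) x
      linarith

lemma invOn_psd {S : Finset K} {B : Matrix K K ℝ} (h : SPDOn S B) :
    (invOn S B).PosSemidef := by
  have hpd := (spd_add_proj_posDef h).inv
  have := hpd.posSemidef.mul_mul_conjTranspose_same (proj K S)
  rwa [proj_conjTranspose] at this

lemma invOn_transpose {S : Finset K} {B : Matrix K K ℝ} (h : SPDOn S B) :
    (invOn S B)ᵀ = invOn S B := transpose_of_herm (invOn_psd h).1

/-- conjugation `π A π` of a psd matrix is psd -/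
lemma proj_conj_psd {S : Finset K} {A : Matrix K K ℝ} (h : A.PosSemidef) :
    (proj K S * A * proj K S).PosSemidef := by
  have := h.mul_mul_conjTranspose_same (proj K S)
  rwa [proj_conjTranspose] at this

lemma conj_quad (S : Finset K) (A : Matrix K K ℝ) (x : K → ℝ) :
    x ⬝ᵥ ((proj K S * A * proj K S) *ᵥ x)
      = (proj K S *ᵥ x) ⬝ᵥ (A *ᵥ (proj K S *ᵥ x)) := by
  rw [← Matrix.mulVec_mulVec, ← Matrix.mulVec_mulVec, dot_symm (proj_transpose S)]

lemma n_posDef {S : Finset K} {C A : Matrix K K ℝ} (hC : C.PosSemidef) (hA : A.PosDef) :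
    (C + proj K S * A * proj K S + proj K Sᶜ).PosDef := by
  refine Matrix.posDef_iff_dotProduct_mulVec.mpr ⟨?_, ?_⟩
  · exact (hC.1.add (proj_conj_psd (S := S) hA.posSemidef).1).add (proj_psd _).1
  · intro x hx
    simp only [star_trivial, Matrix.add_mulVec, dotProduct_add]
    have t1 : 0 ≤ x ⬝ᵥ (C *ᵥ x) := psd_nonneg hC x
    rw [conj_quad]
    by_cases hp : proj K S *ᵥ x = 0
    · have hS : ∀ k ∈ S, x k = 0 := by
        intro k hk
        have := congrFun hp k
        simpa [proj_mulVec, hk] using this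
      have t3 := qQ_pos hS hx
      have t2 : 0 ≤ (proj K S *ᵥ x) ⬝ᵥ (A *ᵥ (proj K S *ᵥ x)) :=
        psd_nonneg hA.posSemidef _
      linarith
    · have t2 := pd_pos hA hp
      have t3 : 0 ≤ x ⬝ᵥ (proj K Sᶜ *ᵥ x) := psd_nonneg (proj_psd _) x
      linarith

/-- a priori bound: the shorted-type operator is dominated by `m`. -/
lemma shorted_le {S : Finset K} {C m : Matrix K K ℝ} (hC : C.PosSemidef) (hm : m.PosDef) :
    (m - proj K S * (C + proj K S * m⁻¹ * proj K S + proj K Sᶜ)⁻¹ * proj K S).PosSemidef := by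
  set π : Matrix K K ℝ := proj K S with hπ
  set n : Matrix K K ℝ := C + π * m⁻¹ * π + proj K Sᶜ with hn
  have hnpd : n.PosDef := n_posDef hC hm.inv
  have hmdet : IsUnit m.det := (Matrix.isUnit_iff_isUnit_det m).mp hm.isUnit
  have hndet : IsUnit n.det := (Matrix.isUnit_iff_isUnit_det n).mp hnpd.isUnit
  have hmT : mᵀ = m := transpose_of_herm hm.1
  have hnT : nᵀ = n := transpose_of_herm hnpd.1
  have hmiT : m⁻¹ᵀ = m⁻¹ := by rw [Matrix.transpose_nonsing_inv, hmT]
  have hniT : n⁻¹ᵀ = n⁻¹ := by rw [Matrix.transpose_nonsing_inv, hnT]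
  refine Matrix.posSemidef_iff_dotProduct_mulVec.mpr ⟨?_, ?_⟩
  · apply herm_of_transpose
    rw [Matrix.transpose_sub, hmT, Matrix.transpose_mul, Matrix.transpose_mul, proj_transpose,
      hniT, ← hπ, Matrix.mul_assoc]
  · intro x
    rw [star_trivial]
    set p : K → ℝ := π *ᵥ x with hp
    set y : K → ℝ := n⁻¹ *ᵥ p with hy
    set z : K → ℝ := π *ᵥ y with hz
    set c : ℝ := p ⬝ᵥ y with hc
    have h1 : x ⬝ᵥ ((π * n⁻¹ * π) *ᵥ x) = c := conj_quad S n⁻¹ x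
    have hny : n *ᵥ y = p := by
      rw [hy, Matrix.mulVec_mulVec, Matrix.mul_nonsing_inv n hndet, Matrix.one_mulVec]
    have hyny : y ⬝ᵥ (n *ᵥ y) = c := by rw [hny, hc, dotProduct_comm]
    have hexp : y ⬝ᵥ (n *ᵥ y)
        = y ⬝ᵥ (C *ᵥ y) + z ⬝ᵥ (m⁻¹ *ᵥ z) + y ⬝ᵥ (proj K Sᶜ *ᵥ y) := by
      rw [hn, Matrix.add_mulVec, Matrix.add_mulVec, dotProduct_add, dotProduct_add,
        conj_quad S m⁻¹ y]
    have a1 : 0 ≤ y ⬝ᵥ (C *ᵥ y) := psd_nonneg hC y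
    have a2 : 0 ≤ y ⬝ᵥ (proj K Sᶜ *ᵥ y) := psd_nonneg (proj_psd _) y
    have hmix : m⁻¹ *ᵥ (m *ᵥ x) = x := by
      rw [Matrix.mulVec_mulVec, Matrix.nonsing_inv_mul m hmdet, Matrix.one_mulVec]
    have hzx : z ⬝ᵥ x = c := by
      rw [hz, ← dot_symm (proj_transpose S) y x, ← hp, dotProduct_comm]
    have hw : 0 ≤ (z - m *ᵥ x) ⬝ᵥ (m⁻¹ *ᵥ (z - m *ᵥ x)) :=
      psd_nonneg hm.inv.posSemidef _
    have hwexp : (z - m *ᵥ x) ⬝ᵥ (m⁻¹ *ᵥ (z - m *ᵥ x))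
        = z ⬝ᵥ (m⁻¹ *ᵥ z) - 2 * c + x ⬝ᵥ (m *ᵥ x) := by
      have e1 : m⁻¹ *ᵥ (z - m *ᵥ x) = m⁻¹ *ᵥ z - x := by
        rw [Matrix.mulVec_sub, hmix]
      rw [e1, sub_dotProduct, dotProduct_sub, dotProduct_sub]
      have e2 : (m *ᵥ x) ⬝ᵥ (m⁻¹ *ᵥ z) = c := by
        rw [dot_symm hmiT, hmix, dotProduct_comm, hzx]
      have e3 : z ⬝ᵥ x = c := hzx
      have e4 : (m *ᵥ x) ⬝ᵥ x = x ⬝ᵥ (m *ᵥ x) := dotProduct_comm _ _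
      rw [e2, e3, e4]; ring
    have hgoal : x ⬝ᵥ ((m - π * n⁻¹ * π) *ᵥ x) = x ⬝ᵥ (m *ᵥ x) - c := by
      rw [Matrix.sub_mulVec, dotProduct_sub, h1]
    rw [hgoal]
    have hzmz : z ⬝ᵥ (m⁻¹ *ᵥ z) + y ⬝ᵥ (C *ᵥ y) + y ⬝ᵥ (proj K Sᶜ *ᵥ y) = c := by
      have h5 := hexp
      rw [hyny] at h5
      linarith
    have hw2 := hwexp ▸ hw
    linarith

lemma psd_smul {c : ℝ} (hc : 0 ≤ c) {A : Matrix K K ℝ} (hA : A.PosSemidef) :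
    (c • A).PosSemidef := by
  refine Matrix.posSemidef_iff_dotProduct_mulVec.mpr ⟨?_, ?_⟩
  · apply herm_of_transpose
    rw [Matrix.transpose_smul, transpose_of_herm hA.1]
  · intro x
    rw [star_trivial, Matrix.smul_mulVec, dotProduct_smul, smul_eq_mul]
    exact mul_nonneg hc (psd_nonneg hA x)

lemma sum_spd_posDef {I : Type*} [Fintype I] [DecidableEq I] (Ki : I → Finset K)
    (hacc : ∀ k : K, 2 ≤ (Finset.univ.filter (fun i : I => k ∈ Ki i)).card)
    (Y : I → Matrix K K ℝ) (hY : ∀ j, SPDOn (Ki j) (Y j)) (i : I) :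
    (∑ j ∈ Finset.univ.erase i, Y j).PosDef := by
  refine Matrix.posDef_iff_dotProduct_mulVec.mpr ⟨?_, ?_⟩
  · apply herm_of_transpose
    rw [Matrix.transpose_sum]
    exact Finset.sum_congr rfl fun j _ => transpose_of_herm (hY j).1.1
  · intro x hx
    rw [star_trivial, quad_sum]
    obtain ⟨k₀, hk₀⟩ := Function.ne_iff.mp hx
    have hk : x k₀ ≠ 0 := by simpa using hk₀
    obtain ⟨j, hjmem, hji⟩ := Finset.exists_mem_ne
      (lt_of_lt_of_le one_lt_two (hacc k₀)) i
    have hkj : k₀ ∈ Ki j := (Finset.mem_filter.mp hjmem).2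
    refine Finset.sum_pos' (fun j _ => psd_nonneg (hY j).1 x) ⟨j, ?_, ?_⟩
    · exact Finset.mem_erase.mpr ⟨hji, Finset.mem_univ _⟩
    · refine spd_pos_of_proj_ne (hY j) ?_
      intro h
      have := congrFun h k₀
      simp [proj_mulVec, hkj] at this
      exact hk this

section Calc

attribute [local instance] Matrix.frobeniusSeminormedAddCommGroup
  Matrix.frobeniusNormedAddCommGroup Matrix.frobeniusNormedSpace
  Matrix.frobeniusNormedRing Matrix.frobeniusNormedAlgebra

noncomputable local instance : CompleteSpace (Matrix K K ℝ) := FiniteDimensional.complete ℝ _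

lemma hasDerivAt_entry {f : ℝ → Matrix K K ℝ} {f' : Matrix K K ℝ} {s : ℝ}
    (hf : HasDerivAt f f' s) (k l : K) :
    HasDerivAt (fun u => f u k l) (f' k l) s := by
  let e : Matrix K K ℝ →ₗ[ℝ] ℝ := (LinearMap.proj l) ∘ₗ (LinearMap.proj k)
  have := (e.toContinuousLinearMap.hasFDerivAt (x := f s)).comp_hasDerivAt s hf
  exact this

lemma hasDerivAt_matrix_inv {f : ℝ → Matrix K K ℝ} {f' : Matrix K K ℝ} {s : ℝ}
    (hf : HasDerivAt f f' s) (h : IsUnit (f s)) :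
    HasDerivAt (fun u => (f u)⁻¹) (-((f s)⁻¹ * f' * (f s)⁻¹)) s := by
  have h2 := (hasFDerivAt_ringInverse (𝕜 := ℝ) h.unit).comp_hasDerivAt s hf
  have hval : ((-((ContinuousLinearMap.mulLeftRight ℝ (Matrix K K ℝ)) ↑h.unit⁻¹) ↑h.unit⁻¹) f')
      = -((f s)⁻¹ * f' * (f s)⁻¹) := by
    simp [Matrix.coe_units_inv, IsUnit.unit_spec]
  have hfun : (Ring.inverse ∘ f) = fun u => (f u)⁻¹ := by
    funext u; simp [Matrix.nonsing_inv_eq_ringInverse]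
  rw [← hfun, ← hval]; exact h2

end Calc

end Stmt9

section Main

open Stmt9

attribute [local instance] Matrix.frobeniusSeminormedAddCommGroup
  Matrix.frobeniusNormedAddCommGroup Matrix.frobeniusNormedSpace
  Matrix.frobeniusNormedRing Matrix.frobeniusNormedAlgebra

set_option maxHeartbeats 1000000 in
/-- Concavity of `Φ(t) = F(X + tH)` along the segment towards the maximal fixed point:
`−Φ_i''(t) = 2 Φ_i(t) D_i(t) (X_{-i}(t) − Φ_i(t)) D_i(t) Φ_i(t)` is positive
semidefinite, where `D_i(t) = X_{-i}(t)⁻¹ H_{-i} X_{-i}(t)⁻¹`. -/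
theorem stmt_9 {I K : Type*} [Fintype I] [DecidableEq I] [Fintype K] [DecidableEq K]
    (Ki : I → Finset K)
    (hacc : ∀ k : K, 2 ≤ (Finset.univ.filter (fun i : I => k ∈ Ki i)).card)
    (B : I → Matrix K K ℝ) (hB : ∀ i, SPDOn (Ki i) (B i))
    (ε : ℝ) (hε : 0 < ε)
    (X H : I → Matrix K K ℝ) (hH : ∀ i, (H i).PosSemidef)
    (hfix : ∀ i, X i = Fmap Ki B X i)
    (hXt : ∀ t ∈ Set.Ioo (-ε) (1 : ℝ), ∀ i, SPDOn (Ki i) (X i + t • H i)) :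
    ∀ i, ∀ t ∈ Set.Ioo (-ε) (1 : ℝ),
      let Φ : ℝ → Matrix K K ℝ := fun s => Fmap Ki B (fun j => X j + s • H j) i
      let Xm : ℝ → Matrix K K ℝ := fun s => ∑ j ∈ Finset.univ.erase i, (X j + s • H j)
      let Hm : Matrix K K ℝ := ∑ j ∈ Finset.univ.erase i, H j
      let D : ℝ → Matrix K K ℝ := fun s => (Xm s)⁻¹ * Hm * (Xm s)⁻¹
      ((2 : ℝ) • (Φ t * D t * (Xm t - Φ t) * D t * Φ t)).PosSemidef ∧
      ∀ k l, deriv (fun s => deriv (fun u => Φ u k l) s) t =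
        -(((2 : ℝ) • (Φ t * D t * (Xm t - Φ t) * D t * Φ t)) k l) := by
  intro i t ht
  intro Φ Xm Hm D
  have hXmPD : ∀ s ∈ Set.Ioo (-ε) (1:ℝ), (Xm s).PosDef := fun s hs =>
    sum_spd_posDef Ki hacc (fun j => X j + s • H j) (fun j => hXt s hs j) i
  have hC : (invOn (Ki i) (B i)).PosSemidef := invOn_psd (hB i)
  set π : Matrix K K ℝ := proj K (Ki i) with hπ
  set N : ℝ → Matrix K K ℝ :=
    fun s => invOn (Ki i) (B i) + π * (Xm s)⁻¹ * π + proj K (Ki i)ᶜ with hN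
  have hNpd : ∀ s ∈ Set.Ioo (-ε) (1:ℝ), (N s).PosDef := fun s hs =>
    n_posDef hC (hXmPD s hs).inv
  have hΦeq : ∀ s, Φ s = π * (N s)⁻¹ * π := fun s => rfl
  -- transposes
  have hHmT : Hmᵀ = Hm := by
    rw [Matrix.transpose_sum]
    exact Finset.sum_congr rfl fun j _ => transpose_of_herm (hH j).1
  have hXmT : ∀ s ∈ Set.Ioo (-ε) (1:ℝ), (Xm s)ᵀ = Xm s := fun s hs =>
    transpose_of_herm (hXmPD s hs).1
  have hDT : (D t)ᵀ = D t := by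
    show ((Xm t)⁻¹ * Hm * (Xm t)⁻¹)ᵀ = _
    rw [Matrix.transpose_mul, Matrix.transpose_mul, Matrix.transpose_nonsing_inv,
      hXmT t ht, hHmT, ← Matrix.mul_assoc]
  have hΦT : (Φ t)ᵀ = Φ t := by
    rw [hΦeq t, Matrix.transpose_mul, Matrix.transpose_mul, proj_transpose,
      Matrix.transpose_nonsing_inv, transpose_of_herm (hNpd t ht).1, hπ, ← Matrix.mul_assoc]
  -- a priori bound
  have hmPhi : (Xm t - Φ t).PosSemidef := by
    rw [hΦeq t, hN]
    exact shorted_le hC (hXmPD t ht)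
  have key : ((2:ℝ) • (Φ t * D t * (Xm t - Φ t) * D t * Φ t)).PosSemidef := by
    have h0 := hmPhi.conjTranspose_mul_mul_same (B := D t * Φ t)
    rw [Matrix.conjTranspose_eq_transpose_of_trivial, Matrix.transpose_mul, hΦT, hDT] at h0
    refine psd_smul (by norm_num) ?_
    have : Φ t * D t * (Xm t - Φ t) * D t * Φ t
        = Φ t * D t * (Xm t - Φ t) * (D t * Φ t) := by
      rw [Matrix.mul_assoc]
    rw [this]
    exact h0
  refine ⟨key, ?_⟩
  -- derivatives
  have hIoo : Set.Ioo (-ε) (1:ℝ) ∈ nhds t := isOpen_Ioo.mem_nhds ht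
  have hXm_eq : Xm = fun s => (∑ j ∈ Finset.univ.erase i, X j) + s • Hm := by
    funext s
    show ∑ j ∈ Finset.univ.erase i, (X j + s • H j) = _
    rw [Finset.sum_add_distrib, Finset.smul_sum]
  have hXmD : ∀ s : ℝ, HasDerivAt Xm Hm s := fun s => by
    rw [hXm_eq]
    have h := ((hasDerivAt_id s).smul_const Hm).const_add (∑ j ∈ Finset.univ.erase i, X j)
    simp only [id, one_smul] at h
    exact h
  have hXminvD : ∀ s ∈ Set.Ioo (-ε) (1:ℝ),
      HasDerivAt (fun u => (Xm u)⁻¹) (-((Xm s)⁻¹ * Hm * (Xm s)⁻¹)) s := fun s hs =>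
    hasDerivAt_matrix_inv (hXmD s) (hXmPD s hs).isUnit
  have hND : ∀ s ∈ Set.Ioo (-ε) (1:ℝ), HasDerivAt N (-(π * D s * π)) s := fun s hs => by
    have h1 := (((hXminvD s hs).const_mul π).mul_const π).const_add (invOn (Ki i) (B i))
    have h2 := h1.add_const (proj K (Ki i)ᶜ)
    have : π * -((Xm s)⁻¹ * Hm * (Xm s)⁻¹) * π = -(π * D s * π) := by
      show _ = -(π * ((Xm s)⁻¹ * Hm * (Xm s)⁻¹) * π)
      rw [Matrix.mul_neg, Matrix.neg_mul]
    rw [← this]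
    exact h2
  have hNinvD : ∀ s ∈ Set.Ioo (-ε) (1:ℝ),
      HasDerivAt (fun u => (N u)⁻¹) ((N s)⁻¹ * (π * D s * π) * (N s)⁻¹) s := fun s hs => by
    have := hasDerivAt_matrix_inv (hND s hs) (hNpd s hs).isUnit
    simpa [Matrix.mul_neg, Matrix.neg_mul] using this
  have hΦD : ∀ s ∈ Set.Ioo (-ε) (1:ℝ), HasDerivAt Φ (Φ s * D s * Φ s) s := fun s hs => by
    have h1 := (((hNinvD s hs).const_mul π).mul_const π)
    have : π * ((N s)⁻¹ * (π * D s * π) * (N s)⁻¹) * π = Φ s * D s * Φ s := by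
      rw [hΦeq s]
      simp only [Matrix.mul_assoc]
    rw [← funext hΦeq, this] at h1
    exact h1
  -- second derivative
  set dD : Matrix K K ℝ :=
    (-((Xm t)⁻¹ * Hm * (Xm t)⁻¹) * Hm) * (Xm t)⁻¹
      + ((Xm t)⁻¹ * Hm) * -((Xm t)⁻¹ * Hm * (Xm t)⁻¹) with hdD
  have hDD : HasDerivAt D dD t := by
    have := ((hXminvD t ht).mul_const Hm).mul (hXminvD t ht)
    exact this
  set G : ℝ → Matrix K K ℝ := fun s => Φ s * D s * Φ s with hG
  set Gval : Matrix K K ℝ :=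
    ((Φ t * D t * Φ t) * D t + Φ t * dD) * Φ t + (Φ t * D t) * (Φ t * D t * Φ t) with hGval
  have hGD : HasDerivAt G Gval t := ((hΦD t ht).mul hDD).mul (hΦD t ht)
  have hval : Gval = -((2:ℝ) • (Φ t * D t * (Xm t - Φ t) * D t * Φ t)) := by
    have hdet : IsUnit (Xm t).det :=
      (Matrix.isUnit_iff_isUnit_det _).mp (hXmPD t ht).isUnit
    have hcan : ∀ Z : Matrix K K ℝ, (Xm t)⁻¹ * (Xm t * Z) = Z := fun Z => by
      rw [← Matrix.mul_assoc, Matrix.nonsing_inv_mul _ hdet, Matrix.one_mul]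
    rw [hGval, hdD]
    rw [two_smul ℝ (Φ t * D t * (Xm t - Φ t) * D t * Φ t)]
    show _ = -((Φ t * ((Xm t)⁻¹ * Hm * (Xm t)⁻¹) * (Xm t - Φ t)
        * ((Xm t)⁻¹ * Hm * (Xm t)⁻¹) * Φ t) + (Φ t * ((Xm t)⁻¹ * Hm * (Xm t)⁻¹) * (Xm t - Φ t)
        * ((Xm t)⁻¹ * Hm * (Xm t)⁻¹) * Φ t))
    have hDt : D t = (Xm t)⁻¹ * Hm * (Xm t)⁻¹ := rfl
    simp only [hDt, mul_sub, sub_mul, mul_add, add_mul, neg_mul, mul_neg, neg_add, neg_sub,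
      neg_neg, Matrix.mul_assoc, hcan]
    abel
  intro k l
  have hinner : ∀ s ∈ Set.Ioo (-ε) (1:ℝ), deriv (fun u => Φ u k l) s = G s k l :=
    fun s hs => (hasDerivAt_entry (hΦD s hs) k l).deriv
  have hev : (fun s => deriv (fun u => Φ u k l) s) =ᶠ[nhds t] (fun s => G s k l) :=
    Filter.eventuallyEq_of_mem hIoo hinner
  rw [hev.deriv_eq, (hasDerivAt_entry hGD k l).deriv, hval]
  rfl


end Main
end

section
/- In the four-trader two-security full-participation example with C₀ = [[1, ρ],[ρ, 1]] and C₁ = Id, the symmetric equilibrium is X^f_1 = V h₁(D^ρ) V and X^f_0 = V h₀(D^ρ) V, where V = (1/√2)[[1,1],[1,−1]], D^ρ = diag(1/(1+ρ), 1/(1−ρ)), h₁(x) = 1/4 − (5/12)x + √((1/4 − (5/12)x)² + (2/3)x), and h₀(x) = 3x h₁(x)/(x + 3h₁(x)); i.e., these satisfy X^f_0 = (C₀ + (3X^f_1)⁻¹)⁻¹ and X^f_1 = (C₁ + (X^f_0 + 2X^f_1)⁻¹)⁻¹. -/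
open Matrix BigOperators Filter Topology

noncomputable def H1 (x : ℝ) : ℝ :=
  1 / 4 - (5 / 12) * x + Real.sqrt ((1 / 4 - (5 / 12) * x) ^ 2 + (2 / 3) * x)

noncomputable def H0 (x : ℝ) : ℝ := 3 * x * H1 x / (x + 3 * H1 x)

lemma H1_pos {x : ℝ} (hx : 0 < x) : 0 < H1 x := by
  have h1 : (0:ℝ) ≤ (1 / 4 - (5 / 12) * x) ^ 2 + (2 / 3) * x := by nlinarith
  have h2 := Real.sq_sqrt h1
  have h3 := Real.sqrt_nonneg ((1 / 4 - (5 / 12) * x) ^ 2 + (2 / 3) * x)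
  unfold H1
  nlinarith

lemma H1_quad {x : ℝ} (hx : 0 < x) :
    6 * (H1 x) ^ 2 + (5 * x - 3) * H1 x - 4 * x = 0 := by
  have h1 : (0:ℝ) ≤ (1 / 4 - (5 / 12) * x) ^ 2 + (2 / 3) * x := by nlinarith
  have h2 := Real.sq_sqrt h1
  unfold H1
  nlinarith [h2]

lemma H0_pos {x : ℝ} (hx : 0 < x) : 0 < H0 x := by
  have h1 := H1_pos hx
  unfold H0; positivity

lemma key1 {x : ℝ} (hx : 0 < x) : (x⁻¹ + (3 * H1 x)⁻¹) * H0 x = 1 := by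
  have h1 := H1_pos hx
  have hd : x + 3 * H1 x > 0 := by linarith
  unfold H0
  field_simp
  ring

lemma key2 {x : ℝ} (hx : 0 < x) : (1 + (H0 x + 2 * H1 x)⁻¹) * H1 x = 1 := by
  have h1 := H1_pos hx
  have hd : x + 3 * H1 x > 0 := by linarith
  have h0 := H0_pos hx
  have hq := H1_quad hx
  have hs : H0 x + 2 * H1 x > 0 := by linarith
  unfold H0
  rw [div_add' _ _ _ (ne_of_gt hd)]
  field_simp
  nlinarith [hq, h1, hd]

noncomputable def myV : Matrix (Fin 2) (Fin 2) ℝ := (Real.sqrt 2)⁻¹ • !![1, 1; 1, -1]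

lemma myV_sq : myV * myV = 1 := by
  have h2 : Real.sqrt 2 * Real.sqrt 2 = 2 := Real.mul_self_sqrt (by norm_num)
  have hne : Real.sqrt 2 ≠ 0 := by positivity
  ext i j
  fin_cases i <;> fin_cases j <;>
    simp [myV, Matrix.mul_apply, Fin.sum_univ_two, Matrix.one_apply] <;>
    field_simp <;> rw [Real.sq_sqrt (by norm_num : (0:ℝ) ≤ 2)] <;> norm_num

noncomputable def VDV (d : Fin 2 → ℝ) : Matrix (Fin 2) (Fin 2) ℝ :=
  myV * Matrix.diagonal d * myV

lemma VDV_mul (d e : Fin 2 → ℝ) : VDV d * VDV e = VDV (fun i => d i * e i) := by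
  unfold VDV
  rw [Matrix.mul_assoc (myV * Matrix.diagonal d) myV, ← Matrix.mul_assoc myV (myV * Matrix.diagonal e),
    ← Matrix.mul_assoc myV myV, myV_sq, Matrix.one_mul, ← Matrix.mul_assoc,
    Matrix.mul_assoc myV, Matrix.diagonal_mul_diagonal]

lemma VDV_add (d e : Fin 2 → ℝ) : VDV d + VDV e = VDV (fun i => d i + e i) := by
  unfold VDV
  rw [← Matrix.add_mul, ← Matrix.mul_add, ← Matrix.diagonal_add]

lemma VDV_one : VDV (fun _ => 1) = 1 := by
  unfold VDV
  rw [show (Matrix.diagonal fun _ => (1:ℝ)) = 1 from Matrix.diagonal_one, Matrix.mul_one, myV_sq]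

lemma VDV_inv (d e : Fin 2 → ℝ) (h : ∀ i, d i * e i = 1) : (VDV d)⁻¹ = VDV e := by
  apply Matrix.inv_eq_right_inv
  rw [VDV_mul]
  rw [show (fun i => d i * e i) = fun _ => (1:ℝ) from funext h, VDV_one]

lemma VDV_smul (c : ℝ) (d : Fin 2 → ℝ) : c • VDV d = VDV (fun i => c * d i) := by
  unfold VDV
  rw [← Matrix.smul_mul, ← Matrix.mul_smul, ← Matrix.diagonal_smul]
  rfl

lemma VDV_nsmul (n : ℕ) (d : Fin 2 → ℝ) : n • VDV d = VDV (fun i => (n:ℝ) * d i) := by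
  rw [← VDV_smul, (Nat.cast_smul_eq_nsmul ℝ n _).symm]

lemma C0_eq (ρ : ℝ) : (!![1, ρ; ρ, 1] : Matrix (Fin 2) (Fin 2) ℝ) = VDV ![1 + ρ, 1 - ρ] := by
  have h2 : Real.sqrt 2 * Real.sqrt 2 = 2 := Real.mul_self_sqrt (by norm_num)
  have hne : Real.sqrt 2 ≠ 0 := by positivity
  ext i j
  fin_cases i <;> fin_cases j <;>
    simp [VDV, myV, Matrix.mul_apply, Fin.sum_univ_two, Matrix.diagonal_apply,
      Matrix.vecHead, Matrix.vecTail, Matrix.vecMul, dotProduct] <;>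
    field_simp <;> rw [Real.sq_sqrt (by norm_num : (0:ℝ) ≤ 2)] <;> ring

/-- Full-participation example: with `C₀ = [[1, ρ], [ρ, 1]]`, `C₁ = Id`,
`V = (1/√2)[[1,1],[1,−1]]`, the matrices `X^f_1 = V h₁(D^ρ) V` and `X^f_0 = V h₀(D^ρ) V`
satisfy `X^f_0 = (C₀ + (3X^f_1)⁻¹)⁻¹` and `X^f_1 = (C₁ + (X^f_0 + 2X^f_1)⁻¹)⁻¹`. -/
theorem stmt_18 (ρ : ℝ) (hρ : ρ ∈ Set.Ioo (-1 : ℝ) 1) :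
    let h1 : ℝ → ℝ := fun x =>
      1 / 4 - (5 / 12) * x + Real.sqrt ((1 / 4 - (5 / 12) * x) ^ 2 + (2 / 3) * x)
    let h0 : ℝ → ℝ := fun x => 3 * x * h1 x / (x + 3 * h1 x)
    let V : Matrix (Fin 2) (Fin 2) ℝ := (Real.sqrt 2)⁻¹ • !![1, 1; 1, -1]
    let C0 : Matrix (Fin 2) (Fin 2) ℝ := !![1, ρ; ρ, 1]
    let X1 : Matrix (Fin 2) (Fin 2) ℝ :=
      V * Matrix.diagonal ![h1 (1 / (1 + ρ)), h1 (1 / (1 - ρ))] * V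
    let X0 : Matrix (Fin 2) (Fin 2) ℝ :=
      V * Matrix.diagonal ![h0 (1 / (1 + ρ)), h0 (1 / (1 - ρ))] * V
    X0 = (C0 + (3 • X1)⁻¹)⁻¹ ∧
    X1 = ((1 : Matrix (Fin 2) (Fin 2) ℝ) + (X0 + 2 • X1)⁻¹)⁻¹ := by
  obtain ⟨hl, hr⟩ := hρ
  have ha : (0:ℝ) < 1 + ρ := by linarith
  have hb : (0:ℝ) < 1 - ρ := by linarith
  intro h1 h0 V C0 X1 X0
  set xa : ℝ := 1 / (1 + ρ) with hxa
  set xb : ℝ := 1 / (1 - ρ) with hxb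
  have hxa0 : 0 < xa := by positivity
  have hxb0 : 0 < xb := by positivity
  have h1a := H1_pos hxa0
  have h1b := H1_pos hxb0
  have h0a := H0_pos hxa0
  have h0b := H0_pos hxb0
  have hX1 : X1 = VDV ![H1 xa, H1 xb] := rfl
  have hX0 : X0 = VDV ![H0 xa, H0 xb] := rfl
  have hC0 : C0 = VDV ![1 + ρ, 1 - ρ] := C0_eq ρ
  have hinvxa : xa⁻¹ = 1 + ρ := by rw [hxa, one_div, inv_inv]
  have hinvxb : xb⁻¹ = 1 - ρ := by rw [hxb, one_div, inv_inv]
  constructor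
  · rw [hX0, hX1, hC0, VDV_nsmul,
      VDV_inv _ (fun i => ((3:ℝ) * ![H1 xa, H1 xb] i)⁻¹) (by
        intro i; fin_cases i <;> simp <;> field_simp <;> ring),
      VDV_add]
    rw [VDV_inv _ ![H0 xa, H0 xb] (by
      intro i
      fin_cases i <;>
        simp only [Matrix.cons_val_zero, Matrix.cons_val_one, Matrix.head_cons,
          Fin.isValue, Matrix.cons_val', Matrix.empty_val', Matrix.cons_val_fin_one]
      · rw [← hinvxa]; exact key1 hxa0
      · rw [← hinvxb]; exact key1 hxb0)]
  · rw [hX0, hX1, ← VDV_one, VDV_nsmul, VDV_add,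
      VDV_inv _ (fun i => (![H0 xa, H0 xb] i + (2:ℝ) * ![H1 xa, H1 xb] i)⁻¹) (by
        intro i; fin_cases i <;> simp <;> field_simp <;> positivity),
      VDV_add]
    rw [VDV_inv _ ![H1 xa, H1 xb] (by
      intro i
      fin_cases i <;>
        simp only [Matrix.cons_val_zero, Matrix.cons_val_one, Matrix.head_cons,
          Fin.isValue, Matrix.cons_val', Matrix.empty_val', Matrix.cons_val_fin_one]
      · exact key2 hxa0
      · exact key2 hxb0)]
end
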